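/- Let v : 2^M → ℝ≥0 be a monotone α-submodular valuation (α ≥ 1) that is ε-close to a linear valuation ℓ(S) = c + Σ_{j∈S} l_j, and let p : M → ℝ≥0 be a price vector. Suppose B ⊆ S ⊆ M satisfy: (i) α·(v(B'') − v(∅)) ≥ p(B'') for every B'' ⊆ B; and (ii) v(S) − p(S) ≥ v(B ∪ X) − p(B ∪ X) for every X ⊆ M. Then for every bundle T ⊆ M: v(S) − p(S) ≥ ℓ(T) − p(T) − (2ε + α − 1)·v(S). -/

import Mathlib

/-- key inequality in the analysis of Kelso–Crawford for
`α`-submodular, `ε`-close-to-linear valuations.  Let `v` be a monotone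
`α`-submodular valuation (`α ≥ 1`) that is `ε`-close to the linear valuation
`ℓ(S) = c + Σ_{j∈S} l j`, and let `p` be a price vector.  Suppose `B ⊆ S`
satisfy: (i) `α·(v(B'') − v(∅)) ≥ p(B'')` for every `B'' ⊆ B`, and
(ii) `v(S) − p(S) ≥ v(B ∪ X) − p(B ∪ X)` for every `X ⊆ M`.  Then for every
bundle `T`: `v(S) − p(S) ≥ ℓ(T) − p(T) − (2ε + α − 1)·v(S)`. -/
theorem kelso_crawford_single_player_linear
    {M : Type*} [Fintype M] [DecidableEq M]
    (α ε : ℝ) (hα : 1 ≤ α) (hε : 0 ≤ ε)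
    (v : Finset M → ℝ)
    (hv : ∀ S : Finset M, 0 ≤ v S)
    (hmono : ∀ S T : Finset M, S ⊆ T → v S ≤ v T)
    (hsub : ∀ S T : Finset M, S ⊆ T → ∀ j : M, j ∉ T →
      α * (v (insert j S) - v S) ≥ v (insert j T) - v T)
    (c : ℝ) (hc : 0 ≤ c) (l : M → ℝ) (hl : ∀ j : M, 0 ≤ l j)
    (ℓ : Finset M → ℝ) (hℓ : ∀ S : Finset M, ℓ S = c + ∑ j ∈ S, l j)
    (hclose : ∀ S : Finset M, ℓ S ≤ v S ∧ v S ≤ (1 + ε) * ℓ S)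
    (p : M → ℝ) (hp : ∀ j : M, 0 ≤ p j)
    (B S : Finset M) (hBS : B ⊆ S)
    (hIR : ∀ B'' : Finset M, B'' ⊆ B → α * (v B'' - v ∅) ≥ ∑ j ∈ B'', p j)
    (hopt : ∀ X : Finset M,
      v S - (∑ j ∈ S, p j) ≥ v (B ∪ X) - ∑ j ∈ B ∪ X, p j)
    (T : Finset M) :
    v S - (∑ j ∈ S, p j) ≥
      ℓ T - (∑ j ∈ T, p j) - (2 * ε + α - 1) * v S := by
  classical
  set A : Finset M := B \ T with hA
  have hAB : A ⊆ B := Finset.sdiff_subset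
  have hAS : A ⊆ S := hAB.trans hBS
  have hdisj : Disjoint A T := Finset.sdiff_disjoint
  have hunion : A ∪ T = B ∪ T := Finset.sdiff_union_self_eq_union
  have hsumP : ∑ j ∈ B ∪ T, p j = ∑ j ∈ A, p j + ∑ j ∈ T, p j := by
    rw [← hunion, Finset.sum_union hdisj]
  have hsumL : ∑ j ∈ B ∪ T, l j = ∑ j ∈ A, l j + ∑ j ∈ T, l j := by
    rw [← hunion, Finset.sum_union hdisj]
  have h1 := hopt T
  have h2 : c + (∑ j ∈ A, l j + ∑ j ∈ T, l j) ≤ v (B ∪ T) := by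
    have := (hclose (B ∪ T)).1
    rw [hℓ, hsumL] at this
    exact this
  have h3 : v A ≤ (1 + ε) * (c + ∑ j ∈ A, l j) := by
    have := (hclose A).2
    rw [hℓ] at this
    exact this
  have h4 : c + ∑ j ∈ A, l j ≤ v A := by
    have := (hclose A).1
    rw [hℓ] at this
    exact this
  have h5 : c ≤ v ∅ := by
    have := (hclose ∅).1
    rw [hℓ] at this
    simpa using this
  have h6 := hIR A hAB
  have h7 : v A ≤ v S := hmono _ _ hAS
  rw [hℓ, hsumP] at *
  -- Suffices: p(A) ≤ Σ_A l + (2ε + α − 1) · v S, then chain with h1, h2.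
  have hαε : (0:ℝ) ≤ α * (1 + ε) - 1 := by nlinarith
  nlinarith [mul_nonneg (sub_nonneg.2 h7) hαε, mul_nonneg hε (hv S),
    mul_nonneg (mul_nonneg hε hε) (hv S), mul_nonneg hε hc,
    mul_nonneg (sub_nonneg.2 hα) hc, mul_nonneg hε (sub_nonneg.2 h7),
    mul_nonneg (sub_nonneg.2 hα) (sub_nonneg.2 h5)]
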